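/- arXiv:2401.10490 — 2 statements merged into one kernel-verified Lean document; each statement's English description precedes it below -/
import Mathlib

section
/- Let (Ω, 𝔽, P) be a probability space, c > 0, and let N ≥ 1 and n ≥ 1 be integers. For each j ∈ {1, ..., N} and i ∈ {1, ..., n}, let h_{j,i} be a real-valued random variable with E[h_{j,i}] = 0 and |h_{j,i}| ≤ c almost surely, and suppose that for each fixed j the random variables h_{j,1}, ..., h_{j,n} are mutually independent. Then E[ max_{1 ≤ j ≤ N} ( (1/n)·∑_{i=1}^n h_{j,i} − (1/(4c))·(1/n)·∑_{i=1}^n E[h_{j,i}²] ) ] ≤ (3c·log N)/n. -/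
open MeasureTheory ProbabilityTheory
open scoped BigOperators

lemma exp_le_quad {x : ℝ} (hx : |x| ≤ 1/3) : Real.exp x ≤ 1 + x + (3/4) * x^2 := by
  have h1 : |x| ≤ 1 := hx.trans (by norm_num)
  have hb := Real.exp_bound h1 (n := 3) (by norm_num)
  have hsum : ∑ m ∈ Finset.range 3, x ^ m / m.factorial = 1 + x + x^2/2 := by
    norm_num [Finset.sum_range_succ, Nat.factorial]
  rw [hsum] at hb
  have h2 := (abs_le.mp hb).2
  have h3 : |x|^3 ≤ (1/3) * x^2 := by
    have hx2 : |x|^3 = |x| * x^2 := by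
      rw [pow_succ']
      rw [sq_abs]
    rw [hx2]
    nlinarith [abs_nonneg x, sq_nonneg x]
  norm_num [Nat.factorial] at h2
  nlinarith [abs_nonneg x]

set_option maxHeartbeats 1000000 in
/-- Variance-penalized maximal inequality from the proof of Lemma B.6: for a finite
family of rows of centered, bounded, independent random variables,
`E[max_j ((1/n)∑ᵢ h_{j,i} − (1/(4c))·(1/n)∑ᵢ E[h_{j,i}²])] ≤ 3c·log N / n`. -/
theorem stmt_12 {Ω : Type*} [MeasurableSpace Ω] (μ : Measure Ω) [IsProbabilityMeasure μ]
    (c : ℝ) (hc : 0 < c) (N n : ℕ) (hN : 1 ≤ N) (hn : 1 ≤ n)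
    (h : Fin N → Fin n → Ω → ℝ)
    (hmeas : ∀ j i, Measurable (h j i))
    (hmean : ∀ j i, ∫ ω, h j i ω ∂μ = 0)
    (hbdd : ∀ j i, ∀ᵐ ω ∂μ, |h j i ω| ≤ c)
    (hindep : ∀ j, iIndepFun (fun i => h j i) μ) :
    ∫ ω, (⨆ j : Fin N,
        ((1 / (n : ℝ)) * ∑ i, h j i ω -
          (1 / (4 * c)) * ((1 / (n : ℝ)) * ∑ i, ∫ ω', (h j i ω') ^ 2 ∂μ))) ∂μ ≤
      3 * c * Real.log N / n := by
  haveI : Nonempty (Fin N) := Fin.pos_iff_nonempty.mp hN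
  have hne : (Finset.univ : Finset (Fin N)).Nonempty := Finset.univ_nonempty
  have hnpos : (0 : ℝ) < n := by exact_mod_cast hn
  set s : ℝ := 1 / (3 * c) with hs_def
  have hs_pos : 0 < s := by positivity
  set K : Fin N → ℝ := fun j => (1 / (4 * c)) * ∑ i, ∫ ω', (h j i ω') ^ 2 ∂μ with hK
  set G : Fin N → Ω → ℝ := fun j ω => (∑ i, h j i ω) - K j with hG
  have hGmeas : ∀ j, Measurable (G j) := fun j =>
    (Finset.measurable_sum Finset.univ fun i _ => hmeas j i).sub measurable_const
  -- per-variable integrability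
  have hint_h : ∀ j i, Integrable (h j i) μ := fun j i =>
    Integrable.mono' (integrable_const c) (hmeas j i).aestronglyMeasurable
      ((hbdd j i).mono fun ω hω => by simpa [Real.norm_eq_abs] using hω)
  have hint_h2 : ∀ j i, Integrable (fun ω => (h j i ω)^2) μ := fun j i =>
    Integrable.mono' (integrable_const (c^2)) ((hmeas j i).pow_const 2).aestronglyMeasurable
      ((hbdd j i).mono fun ω hω => by
        rw [Real.norm_eq_abs, abs_pow]
        nlinarith [abs_nonneg (h j i ω)])
  have hsc : s * c = 1/3 := by rw [hs_def]; field_simp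
  -- per-variable mgf bound
  have hmgf : ∀ j i, mgf (h j i) μ s ≤ Real.exp (s / (4*c) * ∫ ω', (h j i ω')^2 ∂μ) := by
    intro j i
    have hae : ∀ᵐ ω ∂μ, Real.exp (s * h j i ω) ≤ 1 + s * h j i ω + (3/4) * (s * h j i ω)^2 :=
      (hbdd j i).mono fun ω hω => by
        refine exp_le_quad ?_
        rw [abs_mul, abs_of_pos hs_pos]
        calc s * |h j i ω| ≤ s * c := by nlinarith
          _ = 1/3 := hsc
    have hint_exp : Integrable (fun ω => Real.exp (s * h j i ω)) μ :=
      Integrable.mono' (integrable_const (Real.exp (1/3)))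
        ((hmeas j i).const_mul s).exp.aestronglyMeasurable
        ((hbdd j i).mono fun ω hω => by
          rw [Real.norm_eq_abs, abs_of_pos (Real.exp_pos _)]
          refine Real.exp_le_exp.mpr ?_
          calc s * h j i ω ≤ s * |h j i ω| := by nlinarith [le_abs_self (h j i ω)]
            _ ≤ s * c := by nlinarith
            _ = 1/3 := hsc)
    have hrhs_eq : (fun ω => (3/4) * (s * h j i ω)^2) = fun ω => (3/4 * s^2) * (h j i ω)^2 := by
      funext ω; ring
    have hint_rhs : Integrable (fun ω => 1 + s * h j i ω + (3/4) * (s * h j i ω)^2) μ := by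
      refine Integrable.add (Integrable.add (integrable_const 1) ((hint_h j i).const_mul s)) ?_
      rw [hrhs_eq]; exact (hint_h2 j i).const_mul _
    have h1 : mgf (h j i) μ s ≤ ∫ ω, (1 + s * h j i ω + (3/4) * (s * h j i ω)^2) ∂μ :=
      integral_mono_ae hint_exp hint_rhs hae
    have h2 : ∫ ω, (1 + s * h j i ω + (3/4) * (s * h j i ω)^2) ∂μ
        = 1 + (3/4 * s^2) * ∫ ω, (h j i ω)^2 ∂μ := by
      have e1 : ∀ ω : Ω, 1 + s * h j i ω + (3/4) * (s * h j i ω)^2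
          = 1 + s * h j i ω + (3/4 * s^2) * (h j i ω)^2 := fun ω => by ring
      simp only [e1]
      have I1 : Integrable (fun ω => 1 + s * h j i ω) μ := by
        exact (integrable_const 1).add ((hint_h j i).const_mul s)
      have I2 : Integrable (fun ω => (3/4 * s^2) * (h j i ω)^2) μ :=
        (hint_h2 j i).const_mul _
      rw [integral_add I1 I2,
        integral_add (integrable_const 1) ((hint_h j i).const_mul s),
        integral_const, integral_const_mul, integral_const_mul, hmean j i]
      simp
    have hcoef : (3/4 : ℝ) * s^2 = s / (4*c) := by
      rw [hs_def]; field_simp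
    have h3 : 1 + (3/4 * s^2) * ∫ ω, (h j i ω)^2 ∂μ
        ≤ Real.exp ((3/4 * s^2) * ∫ ω, (h j i ω)^2 ∂μ) := by
      linarith [Real.add_one_le_exp ((3/4 * s^2) * ∫ ω, (h j i ω)^2 ∂μ)]
    calc mgf (h j i) μ s ≤ 1 + (3/4 * s^2) * ∫ ω, (h j i ω)^2 ∂μ := h2 ▸ h1
      _ ≤ Real.exp ((3/4 * s^2) * ∫ ω, (h j i ω)^2 ∂μ) := h3
      _ = Real.exp (s / (4*c) * ∫ ω', (h j i ω')^2 ∂μ) := by rw [hcoef]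
  -- key: per-row exponential integral ≤ 1
  have key : ∀ j, ∫ ω, Real.exp (s * G j ω) ∂μ ≤ 1 := by
    intro j
    have heq : ∀ ω, Real.exp (s * G j ω)
        = Real.exp (-(s * K j)) * Real.exp (s * ∑ i, h j i ω) := by
      intro ω
      rw [← Real.exp_add]
      congr 1
      rw [hG]; ring
    have hmgf_sum : mgf (∑ i, h j i) μ s = ∏ i, mgf (h j i) μ s :=
      (hindep j).mgf_sum (fun i => hmeas j i) Finset.univ
    have hsum_apply : ∫ ω, Real.exp (s * ∑ i, h j i ω) ∂μ = mgf (∑ i, h j i) μ s := by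
      rw [mgf]
      congr 1
      funext ω
      simp [Finset.sum_apply]
    calc ∫ ω, Real.exp (s * G j ω) ∂μ
        = Real.exp (-(s * K j)) * ∫ ω, Real.exp (s * ∑ i, h j i ω) ∂μ := by
          simp only [heq]; rw [integral_const_mul]
      _ = Real.exp (-(s * K j)) * ∏ i, mgf (h j i) μ s := by rw [hsum_apply, hmgf_sum]
      _ ≤ Real.exp (-(s * K j)) * ∏ i, Real.exp (s / (4*c) * ∫ ω', (h j i ω')^2 ∂μ) := by
          refine mul_le_mul_of_nonneg_left ?_ (Real.exp_pos _).le
          exact Finset.prod_le_prod (fun i _ => mgf_nonneg) (fun i _ => hmgf j i)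
      _ = Real.exp (-(s * K j)) * Real.exp (∑ i, s / (4*c) * ∫ ω', (h j i ω')^2 ∂μ) := by
          rw [Real.exp_sum]
      _ = 1 := by
          rw [← Real.exp_add]
          have : s * K j = ∑ i, s / (4*c) * ∫ ω', (h j i ω')^2 ∂μ := by
            simp only [hK]
            rw [← mul_assoc, Finset.mul_sum]
            exact Finset.sum_congr rfl fun i _ => by ring
          rw [← this]
          simp
  -- supremum function
  set F : Ω → ℝ := fun ω => Finset.univ.sup' hne (fun j => G j ω) with hF
  have hFmeas : Measurable F := by
    have := Finset.measurable_sup' hne (fun j (_ : j ∈ Finset.univ) => hGmeas j)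
    have heq : (Finset.univ.sup' hne G) = F := by
      funext ω
      rw [hF, Finset.sup'_apply]
    rwa [heq] at this
  set C : ℝ := (n:ℝ) * c + Finset.univ.sup' hne (fun j => |K j|) with hC
  have hbdd_all : ∀ᵐ ω ∂μ, ∀ j i, |h j i ω| ≤ c := by
    rw [ae_all_iff]
    intro j
    rw [ae_all_iff]
    exact hbdd j
  have hGbdd : ∀ᵐ ω ∂μ, ∀ j, |G j ω| ≤ C := by
    refine hbdd_all.mono fun ω hω j => ?_
    have h1 : |∑ i, h j i ω| ≤ (n:ℝ) * c := by
      calc |∑ i, h j i ω| ≤ ∑ i, |h j i ω| := Finset.abs_sum_le_sum_abs _ _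
        _ ≤ ∑ _i : Fin n, c := Finset.sum_le_sum fun i _ => hω j i
        _ = (n:ℝ) * c := by simp [mul_comm]
    have h2 : |K j| ≤ Finset.univ.sup' hne (fun j => |K j|) :=
      Finset.le_sup' (fun j => |K j|) (Finset.mem_univ j)
    calc |G j ω| ≤ |∑ i, h j i ω| + |K j| := abs_sub _ _
      _ ≤ C := by rw [hC]; linarith
  have hFbdd : ∀ᵐ ω ∂μ, |F ω| ≤ C := by
    refine hGbdd.mono fun ω hω => abs_le.mpr ⟨?_, ?_⟩
    · obtain ⟨j0⟩ := (inferInstance : Nonempty (Fin N))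
      calc -C ≤ G j0 ω := by linarith [(abs_le.mp (hω j0)).1]
        _ ≤ F ω := Finset.le_sup' (fun j => G j ω) (Finset.mem_univ j0)
    · exact Finset.sup'_le _ _ fun j _ => (abs_le.mp (hω j)).2
  have hFint : Integrable F μ :=
    Integrable.mono' (integrable_const C) hFmeas.aestronglyMeasurable
      (hFbdd.mono fun ω hω => by simpa [Real.norm_eq_abs] using hω)
  have hexpF_int : Integrable (fun ω => Real.exp (s * F ω)) μ :=
    Integrable.mono' (integrable_const (Real.exp (s * C)))
      ((hFmeas.const_mul s).exp).aestronglyMeasurable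
      (hFbdd.mono fun ω hω => by
        rw [Real.norm_eq_abs, abs_of_pos (Real.exp_pos _)]
        refine Real.exp_le_exp.mpr ?_
        have := (abs_le.mp hω).2
        nlinarith)
  have hint_expG : ∀ j, Integrable (fun ω => Real.exp (s * G j ω)) μ := fun j =>
    Integrable.mono' (integrable_const (Real.exp (s * C)))
      ((hGmeas j).const_mul s).exp.aestronglyMeasurable
      (hGbdd.mono fun ω hω => by
        rw [Real.norm_eq_abs, abs_of_pos (Real.exp_pos _)]
        refine Real.exp_le_exp.mpr ?_
        have := (abs_le.mp (hω j)).2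
        nlinarith)
  -- Jensen
  have hJensen : Real.exp (∫ ω, s * F ω ∂μ) ≤ ∫ ω, Real.exp (s * F ω) ∂μ := by
    have := convexOn_exp.map_integral_le (f := fun ω => s * F ω) (μ := μ)
      Real.continuous_exp.continuousOn isClosed_univ
      (Filter.Eventually.of_forall fun ω => Set.mem_univ _)
      (hFint.const_mul s) (by exact hexpF_int)
    simpa using this
  -- pointwise: exp of sup ≤ sum of exps
  have hmono : Monotone fun x : ℝ => Real.exp (s * x) := fun a b hab =>
    Real.exp_le_exp.mpr (by nlinarith)
  have hptwise : ∀ ω, Real.exp (s * F ω) ≤ ∑ j, Real.exp (s * G j ω) := by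
    intro ω
    have heq : Real.exp (s * F ω)
        = Finset.univ.sup' hne (fun j => Real.exp (s * G j ω)) := by
      rw [hF]
      exact Finset.comp_sup'_eq_sup'_comp hne (fun x => Real.exp (s * x))
        (fun x y => hmono.map_sup x y)
    rw [heq]
    exact Finset.sup'_le _ _ fun j _ =>
      Finset.single_le_sum (f := fun j => Real.exp (s * G j ω))
        (fun j _ => (Real.exp_pos _).le) (Finset.mem_univ j)
  -- combine: exp (s ∫ F) ≤ N
  have hNR : (0:ℝ) < (N:ℝ) := by exact_mod_cast hN
  have hexp_le : Real.exp (s * ∫ ω, F ω ∂μ) ≤ (N:ℝ) := by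
    have h5 : ∫ ω, Real.exp (s * F ω) ∂μ ≤ ∑ j, ∫ ω, Real.exp (s * G j ω) ∂μ := by
      calc ∫ ω, Real.exp (s * F ω) ∂μ ≤ ∫ ω, ∑ j, Real.exp (s * G j ω) ∂μ :=
            integral_mono hexpF_int (integrable_finset_sum _ fun j _ => hint_expG j) hptwise
        _ = ∑ j, ∫ ω, Real.exp (s * G j ω) ∂μ :=
            integral_finset_sum _ fun j _ => hint_expG j
    have h6 : ∑ j, ∫ ω, Real.exp (s * G j ω) ∂μ ≤ (N:ℝ) := by
      calc ∑ j, ∫ ω, Real.exp (s * G j ω) ∂μ ≤ ∑ _j : Fin N, (1:ℝ) :=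
            Finset.sum_le_sum fun j _ => key j
        _ = (N:ℝ) := by simp
    calc Real.exp (s * ∫ ω, F ω ∂μ) = Real.exp (∫ ω, s * F ω ∂μ) := by
          rw [integral_const_mul]
      _ ≤ ∫ ω, Real.exp (s * F ω) ∂μ := hJensen
      _ ≤ (N:ℝ) := h5.trans h6
  have h8 : s * ∫ ω, F ω ∂μ ≤ Real.log N := by
    rw [← Real.exp_log hNR] at hexp_le
    exact Real.exp_le_exp.mp hexp_le
  have h9 : ∫ ω, F ω ∂μ ≤ 3 * c * Real.log N := by
    have h3cs : 3 * c * s = 1 := by rw [hs_def]; field_simp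
    calc ∫ ω, F ω ∂μ = 3 * c * (s * ∫ ω, F ω ∂μ) := by
          rw [← mul_assoc, h3cs, one_mul]
      _ ≤ 3 * c * Real.log N := by nlinarith
  -- rewrite original integrand
  have hrw : ∀ ω, (⨆ j : Fin N,
        ((1 / (n : ℝ)) * ∑ i, h j i ω -
          (1 / (4 * c)) * ((1 / (n : ℝ)) * ∑ i, ∫ ω', (h j i ω') ^ 2 ∂μ)))
      = (1 / (n:ℝ)) * F ω := by
    intro ω
    rw [← Finset.sup'_univ_eq_ciSup, hF]
    have hcongr : (Finset.univ.sup' Finset.univ_nonempty fun j =>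
        ((1 / (n : ℝ)) * ∑ i, h j i ω -
          (1 / (4 * c)) * ((1 / (n : ℝ)) * ∑ i, ∫ ω', (h j i ω') ^ 2 ∂μ)))
        = Finset.univ.sup' hne fun j => (1 / (n:ℝ)) * G j ω := by
      refine Finset.sup'_congr _ rfl fun j _ => ?_
      rw [hG, hK]
      ring
    rw [hcongr]
    have hmono2 : Monotone fun x : ℝ => (1 / (n:ℝ)) * x := fun a b hab => by
      have : (0:ℝ) ≤ 1 / (n:ℝ) := by positivity
      nlinarith
    exact (Finset.comp_sup'_eq_sup'_comp hne (fun x => (1 / (n:ℝ)) * x)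
      (fun x y => hmono2.map_sup x y)).symm
  calc ∫ ω, (⨆ j : Fin N,
        ((1 / (n : ℝ)) * ∑ i, h j i ω -
          (1 / (4 * c)) * ((1 / (n : ℝ)) * ∑ i, ∫ ω', (h j i ω') ^ 2 ∂μ))) ∂μ
      = ∫ ω, (1 / (n:ℝ)) * F ω ∂μ := by simp only [hrw]
    _ = (1 / (n:ℝ)) * ∫ ω, F ω ∂μ := integral_const_mul _ _
    _ ≤ (1 / (n:ℝ)) * (3 * c * Real.log N) := by
        refine mul_le_mul_of_nonneg_left h9 (by positivity)
    _ = 3 * c * Real.log N / n := by ring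
end

section
/- Let (Ω, 𝔽, μ) be a probability space, B > 0, let N ≥ 1 and n ≥ 1 be integers, let g₁, ..., g_N : Ω → ℝ be measurable functions with 0 ≤ g_j(ω) ≤ B for all ω ∈ Ω and all j, and let u₁, ..., u_n be i.i.d. Ω-valued random variables with common distribution μ. Then E[ max_{1 ≤ j ≤ N} ( E_{u∼μ}[g_j(u)] − (2/n)·∑_{i=1}^n g_j(u_i) ) ] ≤ (12·B·log N)/n. -/
open MeasureTheory
open scoped BigOperators


lemma expneg_half : Real.exp (-1) < 1/2 := by
  rw [Real.exp_neg, inv_lt_comm₀ (Real.exp_pos 1) (by norm_num)]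
  calc (1/2:ℝ)⁻¹ = 2 := by norm_num
  _ < Real.exp 1 := by linarith [Real.exp_one_gt_d9]

lemma lemA {Ω : Type*} [MeasurableSpace Ω] (μ : Measure Ω) [IsProbabilityMeasure μ]
    (B : ℝ) (hB : 0 < B) (f : Ω → ℝ) (hf : Measurable f)
    (hbdd : ∀ ω, f ω ∈ Set.Icc (0:ℝ) B) :
    ∫ x, Real.exp (((∫ y, f y ∂μ) - 2 * f x) / (2*B)) ∂μ ≤ 1 := by
  set m := ∫ y, f y ∂μ with hm
  have hint : Integrable f μ := by
    refine ⟨hf.aestronglyMeasurable, HasFiniteIntegral.of_bounded (C := B) (ae_of_all _ fun ω => ?_)⟩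
    have := hbdd ω; rw [Real.norm_eq_abs, abs_le]
    exact ⟨by linarith [this.1], this.2⟩
  have hm0 : 0 ≤ m := integral_nonneg fun ω => (hbdd ω).1
  have hmB : m ≤ B := by
    calc m ≤ ∫ _, B ∂μ := integral_mono hint (integrable_const B) fun ω => (hbdd ω).2
    _ = B := by simp
  set c : ℝ := 1 - Real.exp (-1) with hc
  have hchalf : (1/2:ℝ) ≤ c := by simp only [hc]; linarith [expneg_half]
  have hpt : ∀ ω, Real.exp (-(f ω) / B) ≤ 1 - c * (f ω / B) := by
    intro ω
    set t := f ω / B with ht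
    have ht0 : 0 ≤ t := div_nonneg (hbdd ω).1 hB.le
    have ht1 : t ≤ 1 := (div_le_one hB).2 (hbdd ω).2
    have hcv := convexOn_exp.2 (Set.mem_univ (0:ℝ)) (Set.mem_univ (-1:ℝ))
      (by linarith : (0:ℝ) ≤ 1 - t) ht0 (by ring)
    simp only [smul_eq_mul, mul_zero, Real.exp_zero, mul_neg, mul_one, zero_add] at hcv
    have heq : -(f ω) / B = -t := by rw [ht]; field_simp
    rw [heq]
    calc Real.exp (-t) ≤ (1-t) * 1 + t * Real.exp (-1) := by simpa using hcv
    _ = 1 - c * t := by simp only [hc]; ring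
  have hsplit : ∀ x, Real.exp ((m - 2 * f x) / (2*B))
      = Real.exp (m/(2*B)) * Real.exp (-(f x)/B) := by
    intro x; rw [← Real.exp_add]; congr 1; field_simp; ring
  have hintexp : Integrable (fun x => Real.exp (-(f x)/B)) μ := by
    refine ⟨((hf.neg.div_const B).exp).aestronglyMeasurable,
      HasFiniteIntegral.of_bounded (C := 1) (ae_of_all _ fun ω => ?_)⟩
    rw [Real.norm_eq_abs, abs_of_pos (Real.exp_pos _)]
    exact Real.exp_le_one_iff.mpr
      (div_nonpos_of_nonpos_of_nonneg (by linarith [(hbdd ω).1]) hB.le)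
  have hI : ∫ x, Real.exp (-(f x)/B) ∂μ ≤ 1 - c * (m / B) := by
    calc ∫ x, Real.exp (-(f x)/B) ∂μ ≤ ∫ x, (1 - c * (f x / B)) ∂μ := by
          refine integral_mono hintexp ?_ hpt
          exact (integrable_const 1).sub (((hint.div_const B).const_mul c))
    _ = 1 - c * (m / B) := by
          rw [integral_sub (integrable_const 1) ((hint.div_const B).const_mul c)]
          rw [integral_const_mul]
          simp only [integral_const, measure_univ, ENNReal.toReal_one, smul_eq_mul, one_mul, probReal_univ, mul_one]
          rw [integral_div]
  calc ∫ x, Real.exp ((m - 2 * f x) / (2*B)) ∂μ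
      = Real.exp (m/(2*B)) * ∫ x, Real.exp (-(f x)/B) ∂μ := by
        simp_rw [hsplit]; rw [MeasureTheory.integral_const_mul]
  _ ≤ Real.exp (m/(2*B)) * (1 - c * (m/B)) := by
        refine mul_le_mul_of_nonneg_left hI (Real.exp_pos _).le
  _ ≤ Real.exp (m/(2*B)) * Real.exp (-(c * (m/B))) := by
        refine mul_le_mul_of_nonneg_left ?_ (Real.exp_pos _).le
        linarith [Real.add_one_le_exp (-(c * (m/B)))]
  _ = Real.exp (m/(2*B) - c * (m/B)) := by rw [← Real.exp_add]; ring_nf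
  _ ≤ 1 := by
        rw [Real.exp_le_one_iff]
        have hp0 : 0 ≤ m / B := div_nonneg hm0 hB.le
        have : m/(2*B) = (1/2) * (m/B) := by field_simp
        rw [this]
        nlinarith

/-- Finite-class uniform deviation bound at the core of Lemmas B.6 and 5.7: for a
finite class of `[0,B]`-valued functions and an i.i.d. sample `u₁,…,uₙ ∼ μ`,
`E[max_j (E_{u∼μ}[g_j(u)] − (2/n)∑ᵢ g_j(uᵢ))] ≤ 12·B·log N / n`. -/
theorem stmt_13 {Ω : Type*} [MeasurableSpace Ω] (μ : Measure Ω) [IsProbabilityMeasure μ]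
    (B : ℝ) (hB : 0 < B) (N n : ℕ) (hN : 1 ≤ N) (hn : 1 ≤ n)
    (g : Fin N → Ω → ℝ) (hmeas : ∀ j, Measurable (g j))
    (hbdd : ∀ j ω, g j ω ∈ Set.Icc (0 : ℝ) B) :
    ∫ u : Fin n → Ω,
        (⨆ j : Fin N, ((∫ x, g j x ∂μ) - (2 / (n : ℝ)) * ∑ i, g j (u i)))
        ∂(Measure.pi fun _ : Fin n => μ) ≤
      12 * B * Real.log N / n := by
  have hNpos : (0:ℝ) < N := by exact_mod_cast hN
  have hnpos : (0:ℝ) < n := by exact_mod_cast hn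
  have hlogN : 0 ≤ Real.log N := Real.log_nonneg (by exact_mod_cast hN)
  haveI : Nonempty (Fin N) := Fin.pos_iff_nonempty.mp hN
  letI : MeasureSpace Ω := ⟨μ⟩
  set ν : Measure (Fin n → Ω) := Measure.pi fun _ : Fin n => μ with hν
  haveI hνprob : IsProbabilityMeasure ν := by rw [hν]; infer_instance
  have hνvol : ν = (volume : Measure (Fin n → Ω)) := by
    rw [hν]; exact (MeasureTheory.volume_pi).symm
  set m : Fin N → ℝ := fun j => ∫ x, g j x ∂μ with hm
  set Z : Fin N → (Fin n → Ω) → ℝ := fun j u => m j - (2/(n:ℝ)) * ∑ i, g j (u i) with hZ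
  set S : (Fin n → Ω) → ℝ := fun u => ⨆ j, Z j u with hS
  set lam : ℝ := n / (2*B) with hlamdef
  have hlam : 0 < lam := by positivity
  have hint : ∀ j, Integrable (g j) μ := by
    intro j
    refine ⟨(hmeas j).aestronglyMeasurable,
      HasFiniteIntegral.of_bounded (C := B) (ae_of_all _ fun ω => ?_)⟩
    have := hbdd j ω; rw [Real.norm_eq_abs, abs_le]
    exact ⟨by linarith [this.1], this.2⟩
  have hm0 : ∀ j, 0 ≤ m j := fun j => integral_nonneg fun ω => (hbdd j ω).1
  have hmB : ∀ j, m j ≤ B := by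
    intro j
    calc m j ≤ ∫ _, B ∂μ := integral_mono (hint j) (integrable_const B) fun ω => (hbdd j ω).2
    _ = B := by simp
  have hsumbd : ∀ j (u : Fin n → Ω), 0 ≤ (2/(n:ℝ)) * ∑ i, g j (u i) ∧
      (2/(n:ℝ)) * ∑ i, g j (u i) ≤ 2*B := by
    intro j u
    have h0 : 0 ≤ ∑ i, g j (u i) := Finset.sum_nonneg fun i _ => (hbdd j (u i)).1
    have h1 : ∑ i, g j (u i) ≤ n * B := by
      calc ∑ i, g j (u i) ≤ ∑ _i : Fin n, B := Finset.sum_le_sum fun i _ => (hbdd j (u i)).2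
      _ = n * B := by simp [Finset.sum_const, nsmul_eq_mul]
    constructor
    · positivity
    · rw [div_mul_eq_mul_div, div_le_iff₀ hnpos]
      nlinarith
  have hZbd : ∀ j u, -(2*B) ≤ Z j u ∧ Z j u ≤ B := by
    intro j u
    have := hsumbd j u
    constructor
    · simp only [hZ]; linarith [hm0 j]
    · simp only [hZ]; linarith [hmB j]
  have hle : ∀ (u : Fin n → Ω) (j : Fin N), Z j u ≤ S u := fun u j =>
    le_ciSup (f := fun j => Z j u) (Set.Finite.bddAbove (Set.finite_range fun j => Z j u)) j
  have hSbd : ∀ u, -(2*B) ≤ S u ∧ S u ≤ B := by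
    intro u
    constructor
    · exact le_trans (hZbd (⟨0, hN⟩ : Fin N) u).1 (hle u ⟨0, hN⟩)
    · exact ciSup_le fun j => (hZbd j u).2
  have hZmeas : ∀ j, Measurable (Z j) := by
    intro j
    apply measurable_const.sub
    exact (Finset.measurable_sum Finset.univ
      (fun i _ => (hmeas j).comp (measurable_pi_apply i))).const_mul _
  have hSmeas : Measurable S := Measurable.iSup hZmeas
  have hSint : Integrable S ν := by
    refine ⟨hSmeas.aestronglyMeasurable,
      HasFiniteIntegral.of_bounded (C := 2*B) (ae_of_all _ fun u => ?_)⟩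
    rw [Real.norm_eq_abs, abs_le]
    exact ⟨by linarith [(hSbd u).1], by linarith [(hSbd u).2]⟩
  have hExpJint : ∀ j, Integrable (fun u => Real.exp (lam * Z j u)) ν := by
    intro j
    refine ⟨(((hZmeas j).const_mul lam).exp).aestronglyMeasurable,
      HasFiniteIntegral.of_bounded (C := Real.exp (lam * B)) (ae_of_all _ fun u => ?_)⟩
    rw [Real.norm_eq_abs, abs_of_pos (Real.exp_pos _)]
    exact Real.exp_le_exp.mpr (mul_le_mul_of_nonneg_left (hZbd j u).2 hlam.le)
  have hExpSint : Integrable (fun u => Real.exp (lam * S u)) ν := by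
    refine ⟨((hSmeas.const_mul lam).exp).aestronglyMeasurable,
      HasFiniteIntegral.of_bounded (C := Real.exp (lam * B)) (ae_of_all _ fun u => ?_)⟩
    rw [Real.norm_eq_abs, abs_of_pos (Real.exp_pos _)]
    exact Real.exp_le_exp.mpr (mul_le_mul_of_nonneg_left (hSbd u).2 hlam.le)
  -- key MGF bound per j
  have hkey : ∀ j, ∫ u, Real.exp (lam * Z j u) ∂ν ≤ 1 := by
    intro j
    have hid : ∀ u : Fin n → Ω, lam * Z j u = ∑ i, (m j - 2 * g j (u i)) / (2*B) := by
      intro u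
      have h1 : ∑ i, (m j - 2 * g j (u i)) = n * m j - 2 * ∑ i, g j (u i) := by
        rw [Finset.sum_sub_distrib, Finset.sum_const, Finset.card_univ, Fintype.card_fin,
          ← Finset.mul_sum, nsmul_eq_mul]
      rw [← Finset.sum_div, h1]
      simp only [hZ, hlamdef]
      field_simp
    calc ∫ u, Real.exp (lam * Z j u) ∂ν
        = ∫ u : Fin n → Ω, ∏ i, Real.exp ((m j - 2 * g j (u i)) / (2*B)) ∂ν := by
          congr 1; funext u; rw [hid u, Real.exp_sum]
    _ = (∫ x, Real.exp ((m j - 2 * g j x) / (2*B)) ∂μ) ^ n := by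
          simpa using integral_fintype_prod_eq_pow (ι := Fin n) (μ := μ)
            (fun x => Real.exp ((m j - 2 * g j x) / (2*B)))
    _ ≤ 1 := by
          apply pow_le_one₀
          · exact integral_nonneg fun x => (Real.exp_pos _).le
          · exact lemA μ B hB (g j) (hmeas j) (hbdd j)
  -- Jensen
  have hjen : Real.exp (lam * ∫ u, S u ∂ν) ≤ ∫ u, Real.exp (lam * S u) ∂ν := by
    have := convexOn_exp.map_integral_le (μ := ν) (f := fun u => lam * S u)
      Real.continuous_exp.continuousOn isClosed_univ
      (ae_of_all _ fun _ => Set.mem_univ _) (hSint.const_mul lam) (by exact hExpSint)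
    rwa [integral_const_mul] at this
  -- sum bound
  have hsum : ∫ u, Real.exp (lam * S u) ∂ν ≤ N := by
    calc ∫ u, Real.exp (lam * S u) ∂ν
        ≤ ∫ u, ∑ j, Real.exp (lam * Z j u) ∂ν := by
          refine integral_mono hExpSint (integrable_finset_sum _ fun j _ => hExpJint j) ?_
          intro u
          obtain ⟨j0, hj0⟩ := Finite.exists_max (fun j => Z j u)
          have hSu : S u = Z j0 u :=
            le_antisymm (ciSup_le hj0) (hle u j0)
          show Real.exp (lam * S u) ≤ ∑ j, Real.exp (lam * Z j u)
          rw [hSu]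
          exact Finset.single_le_sum (f := fun j => Real.exp (lam * Z j u))
            (fun j _ => (Real.exp_pos _).le) (Finset.mem_univ j0)
    _ = ∑ j, ∫ u, Real.exp (lam * Z j u) ∂ν := integral_finset_sum _ fun j _ => hExpJint j
    _ ≤ ∑ _j : Fin N, (1:ℝ) := Finset.sum_le_sum fun j _ => hkey j
    _ = N := by simp
  have hfin : lam * ∫ u, S u ∂ν ≤ Real.log N := by
    rw [Real.le_log_iff_exp_le hNpos]
    exact hjen.trans hsum
  have hIS : ∫ u, S u ∂ν ≤ 2 * B * Real.log N / n := by
    have h2 : ∫ u, S u ∂ν ≤ Real.log N / lam := by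
      rw [le_div_iff₀ hlam, mul_comm]; exact hfin
    have h3 : Real.log N / lam = 2 * B * Real.log N / n := by
      rw [hlamdef]; field_simp
    linarith [h2, h3.symm.le, h3.le]
  calc ∫ u : Fin n → Ω, (⨆ j : Fin N, ((∫ x, g j x ∂μ) - (2 / (n : ℝ)) * ∑ i, g j (u i))) ∂ν
      = ∫ u, S u ∂ν := rfl
  _ ≤ 2 * B * Real.log N / n := hIS
  _ ≤ 12 * B * Real.log N / n := by
      gcongr
      nlinarith
end
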